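/- Let k ≥ 2 be an integer, a > 0, and p_n = a·n^{-1-1/k}. Let q_n = P(Binomial(n, p_n) ≥ k) be the probability that a fixed line of n vertices contains at least k open points. Then the probability that none of n independent such lines contains k open points satisfies (1 - q_n)^n → e^{-a^k/k!} as n → ∞. -/

import Mathlib

open Filter

/-- P(Binomial(n,p) ≥ k): the upper tail of the binomial distribution. -/
noncomputable def binomTail (n k : ℕ) (p : ℝ) : ℝ :=
  ∑ j ∈ Finset.Icc k n, (n.choose j : ℝ) * p ^ j * (1 - p) ^ (n - j)

lemma binomTail_le (n k : ℕ) (p : ℝ) (hp0 : 0 ≤ p) (hp1 : p ≤ 1) :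
    binomTail n k p ≤ ((n:ℝ) * p) ^ k / (Nat.factorial k : ℝ) * Real.exp ((n:ℝ) * p) := by
  have hnp : (0:ℝ) ≤ (n:ℝ) * p := by positivity
  have h1 : binomTail n k p ≤ ∑ j ∈ Finset.Icc k n,
      ((n:ℝ)*p)^k / (Nat.factorial k : ℝ) * (((n:ℝ)*p)^(j-k) / (Nat.factorial (j-k) : ℝ)) := by
    apply Finset.sum_le_sum
    intro j hj
    obtain ⟨hkj, hjn⟩ := Finset.mem_Icc.mp hj
    have hfle : ((Nat.factorial k : ℝ) * (Nat.factorial (j-k) : ℝ)) ≤ (Nat.factorial j : ℝ) := by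
      have := Nat.le_of_dvd (Nat.factorial_pos j)
        (Nat.factorial_mul_factorial_dvd_factorial hkj)
      exact_mod_cast this
    calc (n.choose j : ℝ) * p ^ j * (1 - p) ^ (n - j)
        ≤ ((n:ℝ)^j / (Nat.factorial j : ℝ)) * p ^ j * 1 := by
          have hc1 : (n.choose j : ℝ) ≤ (n:ℝ)^j / (Nat.factorial j : ℝ) := by
            have := Nat.choose_le_pow_div (α := ℝ) j n
            push_cast at this
            exact this
          have hc2 : (1 - p) ^ (n - j) ≤ 1 := pow_le_one₀ (by linarith) (by linarith)
          have hc3 : (0:ℝ) ≤ (1 - p) ^ (n - j) := pow_nonneg (by linarith) _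
          exact mul_le_mul (mul_le_mul_of_nonneg_right hc1 (pow_nonneg hp0 j)) hc2 hc3
            (by positivity)
      _ = ((n:ℝ)*p)^j / (Nat.factorial j : ℝ) := by rw [mul_pow]; ring
      _ = ((n:ℝ)*p)^k * ((n:ℝ)*p)^(j-k) / (Nat.factorial j : ℝ) := by
          rw [← pow_add, Nat.add_sub_cancel' hkj]
      _ ≤ ((n:ℝ)*p)^k * ((n:ℝ)*p)^(j-k) / ((Nat.factorial k : ℝ) * (Nat.factorial (j-k) : ℝ)) :=
          div_le_div_of_nonneg_left (by positivity) (by positivity) hfle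
      _ = ((n:ℝ)*p)^k / (Nat.factorial k : ℝ) * (((n:ℝ)*p)^(j-k) / (Nat.factorial (j-k) : ℝ)) := by
          ring
  refine h1.trans ?_
  rw [← Finset.mul_sum]
  apply mul_le_mul_of_nonneg_left ?_ (by positivity)
  have h2 : ∑ j ∈ Finset.Icc k n, ((n:ℝ)*p)^(j-k) / (Nat.factorial (j-k) : ℝ)
      = ∑ i ∈ Finset.range (n + 1 - k), ((n:ℝ)*p)^i / (Nat.factorial i : ℝ) := by
    rw [← Finset.Ico_add_one_right_eq_Icc, Finset.sum_Ico_eq_sum_range]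
    simp [Nat.add_sub_cancel_left]
  rw [h2]
  exact Real.sum_le_exp_of_nonneg hnp _

lemma le_binomTail (n k : ℕ) (hkn : k ≤ n) (p : ℝ) (hp0 : 0 ≤ p) (hp1 : p ≤ 1) :
    (n.choose k : ℝ) * p ^ k * (1 - p) ^ (n - k) ≤ binomTail n k p := by
  have h01 : (0:ℝ) ≤ 1 - p := by linarith
  exact Finset.single_le_sum (f := fun j => (n.choose j : ℝ) * p ^ j * (1 - p) ^ (n - j))
    (fun j _ => by positivity) (Finset.mem_Icc.mpr ⟨le_rfl, hkn⟩)

lemma tendsto_choose_div_pow (k : ℕ) :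
    Tendsto (fun n : ℕ => (n.choose k : ℝ) / (n:ℝ)^k) atTop
      (nhds (1 / (Nat.factorial k : ℝ))) := by
  have h1 : Tendsto (fun n : ℕ => (∏ i ∈ Finset.range k, (1 - (i:ℝ)/(n:ℝ))) /
      (Nat.factorial k : ℝ)) atTop (nhds (1 / (Nat.factorial k : ℝ))) := by
    apply Tendsto.div_const
    have := tendsto_finset_prod (Finset.range k)
      (fun i (_ : i ∈ Finset.range k) => (tendsto_const_nhds.sub
        (tendsto_const_div_atTop_nhds_zero_nat (i:ℝ)) :
        Tendsto (fun n : ℕ => 1 - (i:ℝ)/(n:ℝ)) atTop (nhds (1 - 0))))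
    simpa using this
  refine h1.congr' ?_
  filter_upwards [eventually_ge_atTop k, eventually_ge_atTop 1] with n hkn h1n
  have hn0 : (0:ℝ) < n := by exact_mod_cast h1n
  have hd : (n.descFactorial k : ℝ) = ∏ i ∈ Finset.range k, ((n:ℝ) - i) := by
    rw [Nat.descFactorial_eq_prod_range, Nat.cast_prod]
    apply Finset.prod_congr rfl
    intro i hi
    rw [Nat.cast_sub (le_trans (Finset.mem_range.mp hi).le hkn)]
  have hdc : (n.descFactorial k : ℝ) = (Nat.factorial k : ℝ) * (n.choose k : ℝ) := by
    rw [← Nat.cast_mul, Nat.descFactorial_eq_factorial_mul_choose]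
  have hprod : ∏ i ∈ Finset.range k, (1 - (i:ℝ)/(n:ℝ))
      = (Nat.factorial k : ℝ) * (n.choose k : ℝ) / (n:ℝ)^k := by
    rw [show (∏ i ∈ Finset.range k, (1 - (i:ℝ)/(n:ℝ)))
        = ∏ i ∈ Finset.range k, (((n:ℝ) - i)/(n:ℝ)) from
      Finset.prod_congr rfl (fun i _ => by field_simp),
      Finset.prod_div_distrib, Finset.prod_const, Finset.card_range, ← hd, hdc]
  rw [hprod]
  have hfk : (Nat.factorial k : ℝ) ≠ 0 := by positivity
  field_simp

theorem stmt_12 (k : ℕ) (hk : 2 ≤ k) (a : ℝ) (ha : 0 < a)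
    (p : ℕ → ℝ) (hp : ∀ n, p n = a * (n : ℝ) ^ (-1 - 1 / (k : ℝ) : ℝ)) :
    Tendsto (fun n => (1 - binomTail n k (p n)) ^ n) atTop
      (nhds (Real.exp (-(a ^ k / (Nat.factorial k : ℝ))))) := by
  have hkR : (0:ℝ) < k := by exact_mod_cast (by omega : 0 < k)
  set c : ℝ := a ^ k / (Nat.factorial k : ℝ) with hc
  have hc0 : 0 < c := by positivity
  set q : ℕ → ℝ := fun n => binomTail n k (p n) with hqdef
  -- basic properties of p
  have hp_nonneg : ∀ n, 0 ≤ p n := by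
    intro n
    rw [hp n]
    positivity
  have hp0t : Tendsto p atTop (nhds 0) := by
    have h1 : Tendsto (fun x : ℝ => x ^ (-(1 + 1/(k:ℝ)))) atTop (nhds 0) :=
      tendsto_rpow_neg_atTop (by positivity)
    have h2 := (h1.comp tendsto_natCast_atTop_atTop (α := ℕ)).const_mul a
    rw [mul_zero] at h2
    refine h2.congr fun n => ?_
    rw [hp n, show (-1 - 1/(k:ℝ) : ℝ) = -(1 + 1/(k:ℝ)) by ring]
    rfl
  have hp_lt1 : ∀ᶠ n in atTop, p n < 1 := hp0t.eventually (gt_mem_nhds one_pos)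
  -- n * p n → 0
  have hnp0 : Tendsto (fun n : ℕ => (n:ℝ) * p n) atTop (nhds 0) := by
    have h1 : Tendsto (fun x : ℝ => x ^ (-(1/(k:ℝ)))) atTop (nhds 0) :=
      tendsto_rpow_neg_atTop (by positivity)
    have h2 := (h1.comp tendsto_natCast_atTop_atTop (α := ℕ)).const_mul a
    rw [mul_zero] at h2
    refine h2.congr' ?_
    filter_upwards [eventually_ge_atTop 1] with n hn
    have hn0 : (0:ℝ) < n := by exact_mod_cast hn
    have e1 : (n:ℝ) ^ (-(1/(k:ℝ)) : ℝ) = (n:ℝ) ^ (1:ℝ) * (n:ℝ) ^ (-1 - 1/(k:ℝ) : ℝ) := by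
      rw [← Real.rpow_add hn0]
      congr 1
      ring
    rw [hp n]
    show a * (n:ℝ) ^ (-(1/(k:ℝ)) : ℝ) = (n:ℝ) * (a * (n:ℝ) ^ (-1 - 1/(k:ℝ) : ℝ))
    rw [e1, Real.rpow_one]
    ring
  -- key identity : n * p n ^ k = a^k / n^k
  have hkey : ∀ n : ℕ, 1 ≤ n → (n:ℝ) * (p n) ^ k = a ^ k / (n:ℝ)^k := by
    intro n hn
    have hn0 : (0:ℝ) < n := by exact_mod_cast hn
    rw [hp n, mul_pow, ← Real.rpow_natCast ((n:ℝ) ^ (-1 - 1/(k:ℝ) : ℝ)) k,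
      ← Real.rpow_mul hn0.le]
    have hexp : (-1 - 1/(k:ℝ)) * (k:ℕ) = -(k:ℝ) - 1 := by
      field_simp
    rw [hexp, show (-(k:ℝ) - 1 : ℝ) = -(k:ℝ) + (-1) by ring, Real.rpow_add hn0,
      Real.rpow_neg hn0.le, Real.rpow_natCast, Real.rpow_neg hn0.le, Real.rpow_one]
    field_simp
  -- (1 - p n)^(n-k) → 1
  have hB : Tendsto (fun n : ℕ => (1 - p n) ^ (n - k)) atTop (nhds 1) := by
    have hlow : Tendsto (fun n : ℕ => 1 - (n:ℝ) * p n) atTop (nhds 1) := by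
      have := tendsto_const_nhds (x := (1:ℝ)) (f := atTop (α := ℕ)) |>.sub hnp0
      simpa using this
    refine tendsto_of_tendsto_of_tendsto_of_le_of_le' hlow tendsto_const_nhds ?_ ?_
    · filter_upwards [hp_lt1] with n hn1
      have h0 := hp_nonneg n
      have hber : 1 + ((n - k : ℕ) : ℝ) * (-(p n)) ≤ (1 + (-(p n))) ^ (n - k) :=
        one_add_mul_le_pow (by linarith) (n - k)
      have hcast : ((n - k : ℕ) : ℝ) ≤ (n:ℝ) := by exact_mod_cast Nat.sub_le n k
      have : 1 - (n:ℝ) * p n ≤ 1 + ((n - k : ℕ) : ℝ) * (-(p n)) := by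
        have h1 : ((n - k : ℕ) : ℝ) * p n ≤ (n:ℝ) * p n :=
          mul_le_mul_of_nonneg_right hcast h0
        linarith
      refine this.trans ?_
      simpa [sub_eq_add_neg] using hber
    · filter_upwards [hp_lt1] with n hn1
      exact pow_le_one₀ (by linarith [hp_nonneg n]) (by linarith [hp_nonneg n])
  -- lower sequence
  have hL : Tendsto (fun n : ℕ =>
      (n:ℝ) * ((n.choose k : ℝ) * (p n) ^ k * (1 - p n) ^ (n - k))) atTop (nhds c) := by
    have h1 := ((tendsto_choose_div_pow k).mul_const (a ^ k)).mul hB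
    rw [show 1 / (Nat.factorial k : ℝ) * a ^ k * 1 = c by rw [hc]; ring] at h1
    refine h1.congr' ?_
    filter_upwards [eventually_ge_atTop 1] with n hn
    have hn0 : (0:ℝ) < n := by exact_mod_cast hn
    have hkk := hkey n hn
    rw [show (n:ℝ) * ((n.choose k : ℝ) * p n ^ k * (1 - p n) ^ (n - k))
        = (n.choose k : ℝ) * ((n:ℝ) * p n ^ k) * (1 - p n) ^ (n - k) by ring, hkk]
    ring
  -- upper sequence
  have hU : Tendsto (fun n : ℕ =>
      c * Real.exp ((n:ℝ) * p n)) atTop (nhds c) := by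
    have := (Real.continuous_exp.continuousAt.tendsto.comp hnp0).const_mul c
    simpa using this
  -- squeeze : n * q n → c
  have hnq : Tendsto (fun n : ℕ => (n:ℝ) * q n) atTop (nhds c) := by
    refine tendsto_of_tendsto_of_tendsto_of_le_of_le' hL hU ?_ ?_
    · filter_upwards [hp_lt1, eventually_ge_atTop k] with n hn1 hnk
      exact mul_le_mul_of_nonneg_left
        (le_binomTail n k hnk (p n) (hp_nonneg n) hn1.le) (Nat.cast_nonneg n)
    · filter_upwards [hp_lt1, eventually_ge_atTop 1] with n hn1 hn
      have hn0 : (0:ℝ) < n := by exact_mod_cast hn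
      have hb := binomTail_le n k (p n) (hp_nonneg n) hn1.le
      have h2 : (n:ℝ) * (((n:ℝ) * p n) ^ k / (Nat.factorial k : ℝ)
          * Real.exp ((n:ℝ) * p n)) = c * Real.exp ((n:ℝ) * p n) := by
        have hkk := hkey n hn
        have hnk : ((n:ℝ))^k ≠ 0 := by positivity
        rw [hc, mul_pow]
        calc (n:ℝ) * ((n:ℝ)^k * p n ^ k / (Nat.factorial k : ℝ) * Real.exp ((n:ℝ) * p n))
            = (n:ℝ)^k * ((n:ℝ) * p n ^ k) / (Nat.factorial k : ℝ)
              * Real.exp ((n:ℝ) * p n) := by ring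
          _ = (n:ℝ)^k * (a^k / (n:ℝ)^k) / (Nat.factorial k : ℝ)
              * Real.exp ((n:ℝ) * p n) := by rw [hkk]
          _ = a ^ k / (Nat.factorial k : ℝ) * Real.exp ((n:ℝ) * p n) := by
              field_simp
      calc (n:ℝ) * q n ≤ (n:ℝ) * (((n:ℝ) * p n) ^ k / (Nat.factorial k : ℝ)
            * Real.exp ((n:ℝ) * p n)) :=
          mul_le_mul_of_nonneg_left hb (Nat.cast_nonneg n)
        _ = c * Real.exp ((n:ℝ) * p n) := h2
  -- q n → 0
  have hq0 : Tendsto q atTop (nhds 0) := by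
    have h1 := hnq.mul tendsto_inv_atTop_nhds_zero_nat
    rw [mul_zero] at h1
    refine h1.congr' ?_
    filter_upwards [eventually_ge_atTop 1] with n hn
    have hn0 : ((n:ℝ)) ≠ 0 := by
      have : (0:ℝ) < n := by exact_mod_cast hn
      exact this.ne'
    field_simp
  -- q n > 0 eventually
  have hq_pos : ∀ᶠ n in atTop, 0 < q n := by
    filter_upwards [hp_lt1, eventually_ge_atTop k, eventually_ge_atTop 1] with n hn1 hnk hn
    have hn0 : (0:ℝ) < n := by exact_mod_cast hn
    have hppos : 0 < p n := by
      rw [hp n]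
      positivity
    have hlow := le_binomTail n k hnk (p n) (hp_nonneg n) hn1.le
    have hterm : 0 < (n.choose k : ℝ) * (p n) ^ k * (1 - p n) ^ (n - k) := by
      have hch : 0 < (n.choose k : ℝ) := by exact_mod_cast Nat.choose_pos hnk
      have h1p : 0 < 1 - p n := by linarith
      positivity
    exact hterm.trans_le hlow
  -- log slope
  have hslope : Tendsto (fun n => Real.log (1 - q n) / q n) atTop (nhds (-1)) := by
    have hd : HasDerivAt (fun x : ℝ => Real.log (1 - x)) (-1) 0 := by
      have h1 : HasDerivAt (fun x : ℝ => 1 - x) (-1) 0 := by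
        simpa using (hasDerivAt_id (0:ℝ)).const_sub 1
      have := h1.log (by norm_num)
      simpa using this
    rw [hasDerivAt_iff_tendsto_slope] at hd
    have hqin : Tendsto q atTop (nhdsWithin 0 {(0:ℝ)}ᶜ) := by
      rw [tendsto_nhdsWithin_iff]
      exact ⟨hq0, hq_pos.mono fun n h => h.ne'⟩
    have hcomp := hd.comp hqin
    refine hcomp.congr fun n => ?_
    simp [slope_def_field]
  -- n * log(1 - q n) → -c
  have hnl : Tendsto (fun n : ℕ => (n:ℝ) * Real.log (1 - q n)) atTop (nhds (-c)) := by
    have h1 := hnq.mul hslope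
    rw [show c * (-1) = -c by ring] at h1
    refine h1.congr' ?_
    filter_upwards [hq_pos] with n hn
    field_simp [hn.ne']
  -- conclude
  have hexp := Real.continuous_exp.continuousAt.tendsto.comp hnl
  refine hexp.congr' ?_
  filter_upwards [hq0.eventually (gt_mem_nhds one_pos)] with n hn
  show Real.exp ((n:ℝ) * Real.log (1 - q n)) = (1 - q n) ^ n
  rw [Real.exp_nat_mul, Real.exp_log (by linarith)]
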